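/- Let H : I → ℝ be differentiable and ψ : I → ℝ be twice differentiable on an open interval I, and define ρ_eff := (1/(8π))((9/8)ψ̇ + (9/8)Hψ − (3/16)ψ²) and p_eff := (1/(8π))(−(3/8)ψ̇ − (15/8)Hψ + (5/16)ψ²). Then the effective dark-energy conservation equation ρ̇_eff + 3H(ρ_eff + p_eff) = 0 holds on I if and only if the torsion vector satisfies the evolution equation ψ̈ + Ḣψ + 3Hψ̇ − (1/3)ψψ̇ − 2H²ψ + (1/3)Hψ² = 0 on I. -/

import Mathlib

open Real

/-- With `ρ_eff = (1/(8π))((9/8)ψ̇ + (9/8)Hψ − (3/16)ψ²)` and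
`p_eff = (1/(8π))(−(3/8)ψ̇ − (15/8)Hψ + (5/16)ψ²)`, the effective dark-energy
conservation equation `ρ̇_eff + 3H(ρ_eff + p_eff) = 0` holds on I if and only if
the torsion vector satisfies
`ψ̈ + Ḣψ + 3Hψ̇ − (1/3)ψψ̇ − 2H²ψ + (1/3)Hψ² = 0` on I. -/
theorem effective_conservation_iff_torsion_evolution
    (I : Set ℝ) (hI : IsOpen I)
    (H ψ : ℝ → ℝ)
    (hH : ∀ t ∈ I, DifferentiableAt ℝ H t)
    (hψ : ∀ t ∈ I, DifferentiableAt ℝ ψ t)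
    (hψ' : ∀ t ∈ I, DifferentiableAt ℝ (deriv ψ) t)
    (ρeff peff : ℝ → ℝ)
    (hρeff : ρeff = fun t =>
      (1 / (8 * π)) * ((9/8) * deriv ψ t + (9/8) * H t * ψ t - (3/16) * (ψ t) ^ 2))
    (hpeff : peff = fun t =>
      (1 / (8 * π)) * (-(3/8) * deriv ψ t - (15/8) * H t * ψ t + (5/16) * (ψ t) ^ 2)) :
    (∀ t ∈ I, deriv ρeff t + 3 * H t * (ρeff t + peff t) = 0)
      ↔ (∀ t ∈ I,
          deriv (deriv ψ) t + deriv H t * ψ t + 3 * H t * deriv ψ t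
            - (1/3) * ψ t * deriv ψ t - 2 * (H t) ^ 2 * ψ t
            + (1/3) * H t * (ψ t) ^ 2 = 0) := by

  subst hρeff hpeff
  have hπ : π ≠ 0 := Real.pi_ne_zero
  have key : ∀ t ∈ I, deriv (fun t =>
      (1 / (8 * π)) * ((9/8) * deriv ψ t + (9/8) * H t * ψ t - (3/16) * (ψ t) ^ 2)) t =
      (1 / (8 * π)) * ((9/8) * deriv (deriv ψ) t
        + (9/8) * (deriv H t * ψ t + H t * deriv ψ t)
        - (3/16) * (2 * ψ t * deriv ψ t)) := by
    intro t ht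
    have h1 := (hψ' t ht).hasDerivAt
    have h2 := (hH t ht).hasDerivAt.mul (hψ t ht).hasDerivAt
    have h3 : HasDerivAt (fun x => (ψ x) ^ 2) (2 * ψ t ^ 1 * deriv ψ t) t :=
      (hψ t ht).hasDerivAt.pow 2
    have h4 : HasDerivAt (fun t =>
        (1 / (8 * π)) * ((9/8) * deriv ψ t + (9/8) * H t * ψ t - (3/16) * (ψ t) ^ 2))
        ((1 / (8 * π)) * ((9/8) * deriv (deriv ψ) t
          + (9/8) * (deriv H t * ψ t + H t * deriv ψ t)
          - (3/16) * (2 * ψ t * deriv ψ t))) t := by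
      have := (((h1.const_mul (9/8 : ℝ)).add ((h2.const_mul (9/8 : ℝ)))).sub
        (h3.const_mul (3/16 : ℝ))).const_mul (1 / (8 * π))
      refine (this.congr_deriv (by ring)).congr_of_eventuallyEq (Filter.Eventually.of_forall fun y => ?_)
      simp only [Pi.add_apply, Pi.sub_apply, Pi.mul_apply]
      ring
    exact h4.deriv
  have hid : ∀ t : ℝ,
      (1 / (8 * π)) * ((9/8) * deriv (deriv ψ) t
        + (9/8) * (deriv H t * ψ t + H t * deriv ψ t)
        - (3/16) * (2 * ψ t * deriv ψ t))
      + 3 * H t *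
        ((1 / (8 * π)) * ((9/8) * deriv ψ t + (9/8) * H t * ψ t - (3/16) * (ψ t) ^ 2)
          + (1 / (8 * π)) * (-(3/8) * deriv ψ t - (15/8) * H t * ψ t + (5/16) * (ψ t) ^ 2))
      = (9 / (64 * π)) * (deriv (deriv ψ) t + deriv H t * ψ t + 3 * H t * deriv ψ t
          - (1/3) * ψ t * deriv ψ t - 2 * (H t) ^ 2 * ψ t + (1/3) * H t * (ψ t) ^ 2) := by
    intro t
    field_simp
    ring
  have hc : (9 : ℝ) / (64 * π) ≠ 0 := by positivity
  constructor <;> intro h t ht <;> have h0 := h t ht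
  · rw [key t ht, hid t] at h0
    simpa [hc] using mul_eq_zero.mp h0
  · rw [key t ht]
    simp only at *
    rw [hid t, h0, mul_zero]
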